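/- Let k be a field, and let R = k[[t^5, t^6, t^8 + t^9]] ⊆ k[[t]]. Then the conductor valuation of R is c_R = 10, and with α_3 = 1 + t the unit coefficient of the third generator, o(α_3) + a_1 = 1 + 5 = 6 < 10 = c_R; the sufficient criterion o(α_r) + a ≥ c_R for quasihomogeneity fails for this ring. -/

import Mathlib

open PowerSeries

set_option synthInstance.maxHeartbeats 1000000
set_option maxHeartbeats 1000000

/-- Invariant satisfied by all elements of `k[X^5, X^6, X^8+X^9]`. -/
def GoodPS (k : Type*) [Field k] (p : PowerSeries k) : Prop :=
  coeff 1 p = 0 ∧ coeff 2 p = 0 ∧ coeff 3 p = 0 ∧ coeff 4 p = 0 ∧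
  coeff 7 p = 0 ∧ coeff 9 p = coeff 8 p

lemma goodPS_mul {k : Type*} [Field k] {f g : PowerSeries k}
    (hf : GoodPS k f) (hg : GoodPS k g) : GoodPS k (f * g) := by
  obtain ⟨f1, f2, f3, f4, f7, f98⟩ := hf
  obtain ⟨g1, g2, g3, g4, g7, g98⟩ := hg
  refine ⟨?_, ?_, ?_, ?_, ?_, ?_⟩ <;>
  · simp [PowerSeries.coeff_mul, Finset.Nat.sum_antidiagonal_eq_sum_range_succ_mk,
      Finset.sum_range_succ, f1, f2, f3, f4, f7, f98, g1, g2, g3, g4, g7, g98]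
    try ring

lemma goodPS_of_mem_adjoin {k : Type*} [Field k] {p : PowerSeries k}
    (hp : p ∈ Algebra.adjoin k ({X ^ 5, X ^ 6, X ^ 8 + X ^ 9} : Set (PowerSeries k))) :
    GoodPS k p := by
  induction hp using Algebra.adjoin_induction with
  | mem x hx =>
    rcases hx with h | h | h <;> subst h <;>
      refine ⟨?_, ?_, ?_, ?_, ?_, ?_⟩ <;> simp [coeff_X_pow]
  | algebraMap r =>
    refine ⟨?_, ?_, ?_, ?_, ?_, ?_⟩ <;> simp [PowerSeries.algebraMap_apply, coeff_C]
  | add x y hx hy ihx ihy =>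
    obtain ⟨a1, a2, a3, a4, a7, a98⟩ := ihx
    obtain ⟨b1, b2, b3, b4, b7, b98⟩ := ihy
    refine ⟨?_, ?_, ?_, ?_, ?_, ?_⟩ <;> simp [a1, a2, a3, a4, a7, a98, b1, b2, b3, b4, b7, b98]
  | mul x y hx hy ihx ihy => exact goodPS_mul ihx ihy

theorem stmt18 (k : Type*) [Field k] [IsAlgClosed k] [CharZero k]
    (S : Subalgebra k (PowerSeries k))
    -- the generators of `R` lie in `S`
    (hx : ((X : PowerSeries k) ^ 5 ∈ S) ∧ ((X : PowerSeries k) ^ 6 ∈ S) ∧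
      ((X : PowerSeries k) ^ 8 + X ^ 9 ∈ S))
    -- `S = k[[t^5, t^6, t^8 + t^9]]`: every element of `S` is a limit of polynomials
    -- in the generators
    (hgen : ∀ f ∈ S, ∀ N : ℕ,
      ∃ p ∈ Algebra.adjoin k ({X ^ 5, X ^ 6, X ^ 8 + X ^ 9} : Set (PowerSeries k)),
        ∀ m : ℕ, m < N → coeff m f = coeff m p) :
    -- the conductor valuation is `c_R = 10` …
    ((∀ i : ℕ, 10 ≤ i → (X : PowerSeries k) ^ i ∈ S) ∧
      (∀ c' : ℕ, (∀ i : ℕ, c' ≤ i → (X : PowerSeries k) ^ i ∈ S) → 10 ≤ c')) ∧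
    -- … `o(α_3) = o(1 + t) = 1` …
    ((1 + X - 1 : PowerSeries k).order = (1 : ℕ∞)) ∧
    -- … and the criterion `o(α_r) + a ≥ c_R` fails: `1 + 5 = 6 < 10`
    (1 + 5 < 10) := by
  obtain ⟨h5, h6, h89⟩ := hx
  -- X^9 ∉ S
  have h9 : (X : PowerSeries k) ^ 9 ∉ S := by
    intro hmem
    obtain ⟨p, hp, hcoeff⟩ := hgen _ hmem 10
    obtain ⟨-, -, -, -, -, h98⟩ := goodPS_of_mem_adjoin hp
    have e9 : coeff 9 ((X : PowerSeries k) ^ 9) = coeff 9 p := hcoeff 9 (by norm_num)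
    have e8 : coeff 8 ((X : PowerSeries k) ^ 9) = coeff 8 p := hcoeff 8 (by norm_num)
    rw [coeff_X_pow] at e9 e8
    simp only [if_pos rfl] at e9
    rw [if_neg (by norm_num)] at e8
    rw [h98, ← e8] at e9
    exact one_ne_zero e9
  have h14 : (X : PowerSeries k) ^ 14 ∈ S := by
    rw [show (X : PowerSeries k) ^ 14 = (X ^ 8 + X ^ 9) * X ^ 6 - (X ^ 5) ^ 3 by ring]
    exact sub_mem (mul_mem h89 h6) (pow_mem h5 3)
  have h13 : (X : PowerSeries k) ^ 13 ∈ S := by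
    rw [show (X : PowerSeries k) ^ 13 = (X ^ 8 + X ^ 9) * X ^ 5 - X ^ 14 by ring]
    exact sub_mem (mul_mem h89 h5) h14
  have key : ∀ i : ℕ, 10 ≤ i → (X : PowerSeries k) ^ i ∈ S := by
    intro i
    induction i using Nat.strong_induction_on with
    | _ i ih =>
      intro hi
      by_cases hlt : i < 15
      · interval_cases i
        · rw [show (X : PowerSeries k) ^ 10 = X ^ 5 * X ^ 5 by ring]
          exact mul_mem h5 h5
        · rw [show (X : PowerSeries k) ^ 11 = X ^ 5 * X ^ 6 by ring]
          exact mul_mem h5 h6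
        · rw [show (X : PowerSeries k) ^ 12 = X ^ 6 * X ^ 6 by ring]
          exact mul_mem h6 h6
        · exact h13
        · exact h14
      · rw [show (X : PowerSeries k) ^ i = X ^ 5 * X ^ (i - 5) by
          rw [← pow_add]; congr 1; omega]
        exact mul_mem h5 (ih (i - 5) (by omega) (by omega))
  refine ⟨⟨key, ?_⟩, ?_, by norm_num⟩
  · intro c' hc'
    by_contra hlt
    exact h9 (hc' 9 (by omega))
  · rw [show (1 + X - 1 : PowerSeries k) = X by ring, PowerSeries.order_X]
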